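/- Every element of the augmentation ideal squares to zero (in particular is nilpotent): if f ∈ AddMonoidAlgebra R G satisfies ε f = 0, then f * f = 0. -/

import Mathlib

/-- Over a commutative ring of characteristic 2, every element of the augmentation ideal of the
group algebra of `G = Fin k → ZMod 2` squares to zero. -/
theorem augmentationIdeal_sq_eq_zero (k : ℕ) (R : Type*) [CommRing R] [CharP R 2]
    (ε : AddMonoidAlgebra R (Fin k → ZMod 2) →ₐ[R] R)
    (hε : ∀ (g : Fin k → ZMod 2) (r : R), ε (AddMonoidAlgebra.single g r) = r)
    (f : AddMonoidAlgebra R (Fin k → ZMod 2)) (hf : ε f = 0) :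
    f * f = 0 := by
  set A := AddMonoidAlgebra R (Fin k → ZMod 2)
  have h2 : (2 : A) = 0 := by
    rw [show (2 : A) = algebraMap R A 2 from (map_ofNat _ 2).symm,
      show (2 : R) = 0 from CharP.cast_eq_zero R 2, map_zero]
  have key : ∀ g : A, g * g = AddMonoidAlgebra.single 0 ((ε g) ^ 2) := by
    intro g
    induction g using AddMonoidAlgebra.induction with
    | zero => simp
    | single_add a b g ha hb ih =>
      obtain ⟨g', rfl⟩ : ∃ g' : A, g' = g := ⟨g, rfl⟩
      have hs : (AddMonoidAlgebra.single a b : A) = AddMonoidAlgebra.single a b := rfl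
      rw [hs]
      have expand : (AddMonoidAlgebra.single a b + g' : A) * (AddMonoidAlgebra.single a b + g')
          = AddMonoidAlgebra.single a b * AddMonoidAlgebra.single a b + g' * g'
            + 2 * (AddMonoidAlgebra.single a b * g') := by ring
      rw [expand, h2, zero_mul, add_zero, ih, AddMonoidAlgebra.single_mul_single]
      have haa : a + a = 0 := by
        funext i
        exact CharTwo.add_self_eq_zero _
      rw [haa, show (AddMonoidAlgebra.single (0 : Fin k → ZMod 2) (b * b) : A)
          + AddMonoidAlgebra.single 0 (ε g' ^ 2)
          = AddMonoidAlgebra.single (0 : Fin k → ZMod 2) (b * b + ε g' ^ 2) from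
          (AddMonoidAlgebra.single_add _ _ _).symm, map_add, hε]
      congr 1
      rw [CharTwo.add_sq b (ε g'), sq b]
  rw [key, hf]
  simp
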